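/- (Chu's identity) Let s ≥ 2 and n be natural numbers, let x_1, …, x_s and z be complex numbers. Then the sum, over all tuples (k_1, …, k_s) of natural numbers with k_1 + ⋯ + k_s = n, of the product over i from 1 to s of C(x_i + k_i·z, k_i), equals the sum over k from 0 to n of binom(k+s−2, k)·C(x_1 + ⋯ + x_s + n·z − k, n−k)·z^k, where binom(k+s−2,k) is the ordinary binomial coefficient of natural numbers. -/

import Mathlib

open Finset Polynomial

/-- The generalized binomial coefficient `C(x, k) = x(x-1)⋯(x-k+1)/k!` for `x : ℂ`. -/
noncomputable def genBinom (x : ℂ) (k : ℕ) : ℂ := (∏ i ∈ Finset.range k, (x - i)) / (Nat.factorial k)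

lemma fact_ne (k : ℕ) : ((k.factorial : ℂ)) ≠ 0 := by
  exact_mod_cast Nat.cast_ne_zero.mpr k.factorial_ne_zero


lemma poly_const (p : Polynomial ℂ) (h : ∀ x : ℂ, p.eval (x+1) = p.eval x) :
    ∀ u v : ℂ, p.eval u = p.eval v := by
  have hnat : ∀ m : ℕ, p.eval (m:ℂ) = p.eval 0 := by
    intro m
    induction m with
    | zero => simp
    | succ m ih => push_cast; rw [h (m:ℂ)]; exact ih
  have hzero : p - Polynomial.C (p.eval 0) = 0 := by
    apply Polynomial.eq_zero_of_infinite_isRoot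
    apply Set.Infinite.mono (s := Set.range (fun m : ℕ => (m:ℂ)))
    · rintro x ⟨m, rfl⟩
      simp [Polynomial.IsRoot, hnat m]
    · exact Set.infinite_range_of_injective Nat.cast_injective
  have : ∀ w : ℂ, p.eval w = p.eval 0 := by
    intro w
    have := congrArg (Polynomial.eval w) hzero
    simpa [sub_eq_zero] using this
  intro u v; rw [this u, this v]

lemma nat_prod : ∀ (b k : ℕ), (∏ i ∈ range b, (k+i)) = b.factorial * (k+b-1).choose b := by
  intro b
  induction b with
  | zero => simp
  | succ b ih =>
    intro k
    rw [Finset.prod_range_succ']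
    have h1 : ∀ i, k + (i+1) = (k+1) + i := by omega
    rw [show (∏ i ∈ range b, (k + (i+1))) = ∏ i ∈ range b, ((k+1) + i) from
      Finset.prod_congr rfl fun i _ => by omega]
    rw [ih (k+1), add_zero]
    have key : k * ((k+b).choose b) = (b+1) * ((k+b).choose (b+1)) := by
      have h := Nat.choose_succ_right_eq (k+b) b
      rw [Nat.add_sub_cancel] at h
      rw [mul_comm k, mul_comm (b+1)]
      exact h.symm
    have e1 : k + 1 + b - 1 = k + b := by omega
    have e2 : k + (b+1) - 1 = k + b := by omega
    rw [e1, e2, Nat.factorial_succ]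
    calc b.factorial * (k+b).choose b * k = b.factorial * (k * ((k+b).choose b)) := by ring
      _ = b.factorial * ((b+1) * ((k+b).choose (b+1))) := by rw [key]
      _ = (b+1) * b.factorial * (k+b).choose (b+1) := by ring

lemma genBinom_neg_nat (k b : ℕ) :
    genBinom (-(k:ℂ)) b = (-1)^b * ((k + b - 1).choose b : ℕ) := by
  unfold genBinom
  have h1 : (∏ i ∈ range b, (-(k:ℂ) - i)) = (-1)^b * ∏ i ∈ range b, ((k:ℂ) + i) := by
    rw [show (-1:ℂ)^b = ∏ _i ∈ range b, (-1:ℂ) by rw [Finset.prod_const, Finset.card_range]]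
    rw [← Finset.prod_mul_distrib]
    exact Finset.prod_congr rfl fun i _ => by ring
  have h2 : (∏ i ∈ range b, ((k:ℂ) + i)) = ((b.factorial * (k+b-1).choose b : ℕ) : ℂ) := by
    rw [← nat_prod b k]
    push_cast
    rfl
  rw [h1, h2]
  push_cast
  rw [mul_div_assoc]
  congr 1
  rw [mul_comm, mul_div_assoc, div_self (fact_ne b), mul_one]



lemma genBinom_zero (x : ℂ) : genBinom x 0 = 1 := by simp [genBinom]


lemma pascal (x : ℂ) (k : ℕ) :
    genBinom x (k+1) = genBinom (x-1) (k+1) + genBinom (x-1) k := by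
  have h1 : (∏ i ∈ range (k+1), (x - i)) = x * ∏ i ∈ range k, (x - 1 - i) := by
    rw [Finset.prod_range_succ']
    simp only [Nat.cast_zero, sub_zero]
    rw [mul_comm]
    congr 1
    exact Finset.prod_congr rfl fun i _ => by push_cast; ring
  have h2 : (∏ i ∈ range (k+1), (x - 1 - i)) = (∏ i ∈ range k, (x - 1 - i)) * (x - 1 - k) :=
    Finset.prod_range_succ _ _
  unfold genBinom
  rw [h1, h2]
  rw [div_add_div _ _ (fact_ne (k+1)) (fact_ne k)]
  rw [div_eq_div_iff (fact_ne (k+1)) (by exact mul_ne_zero (fact_ne (k+1)) (fact_ne k))]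
  have hf : ((k+1).factorial : ℂ) = (k+1) * k.factorial := by
    rw [Nat.factorial_succ]; push_cast; ring
  rw [hf]; ring


lemma findiff : ∀ (n : ℕ) (p : Polynomial ℂ), p.natDegree ≤ n →
    ∑ a ∈ range (n+1), (-1:ℂ)^(n+a) * (n.choose a) * p.eval (a:ℂ)
      = n.factorial * p.coeff n := by
  intro n
  induction n with
  | zero =>
    intro p hp
    rw [Finset.sum_range_one, Polynomial.eq_C_of_natDegree_le_zero hp]
    simp
  | succ n ih =>
    intro p hp
    set q : Polynomial ℂ :=
      ∑ m ∈ range (n+2), Polynomial.C (p.coeff m) * ((X+1)^m - X^m) with hq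
    have hev : ∀ b : ℂ, p.eval b = ∑ m ∈ range (n+2), p.coeff m * b^m := by
      intro b
      exact Polynomial.eval_eq_sum_range' (lt_of_le_of_lt hp (by omega)) b
    have hqeval : ∀ a : ℂ, q.eval a = p.eval (a+1) - p.eval a := by
      intro a
      rw [hq]
      simp only [eval_finset_sum, eval_mul, eval_C, eval_sub, eval_pow, eval_add, eval_X, eval_one]
      rw [hev, hev]
      rw [← Finset.sum_sub_distrib]
      exact Finset.sum_congr rfl fun m _ => by ring
    have hqcoeff : ∀ j : ℕ, q.coeff j =
        (∑ m ∈ range (n+2), p.coeff m * (m.choose j)) - p.coeff j := by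
      intro j
      rw [hq, Polynomial.finset_sum_coeff]
      simp only [Polynomial.coeff_C_mul, Polynomial.coeff_sub,
        Polynomial.coeff_X_add_one_pow, Polynomial.coeff_X_pow, mul_sub, mul_ite, mul_one,
        mul_zero]
      rw [Finset.sum_sub_distrib]
      congr 1
      rw [Finset.sum_ite_eq]
      by_cases hj : j ∈ range (n+2)
      · simp [hj]
      · simp only [hj, if_false]
        have : p.natDegree < j := by
          simp only [mem_range, not_lt] at hj; omega
        exact (Polynomial.coeff_eq_zero_of_natDegree_lt this).symm
    have hqdeg : q.natDegree ≤ n := by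
      rw [Polynomial.natDegree_le_iff_coeff_eq_zero]
      intro j hj
      rw [hqcoeff j]
      have h1 : ∀ m ∈ range (n+2), p.coeff m * (m.choose j : ℂ) =
          (if j = m then p.coeff j else 0) := by
        intro m hm
        by_cases hmj : m = j
        · subst hmj; simp
        · have : m.choose j = 0 := by
            apply Nat.choose_eq_zero_of_lt
            simp only [mem_range] at hm
            by_contra hc
            push_neg at hc
            omega
          simp [this, hmj, Ne.symm hmj]
      rw [Finset.sum_congr rfl h1, Finset.sum_ite_eq]
      by_cases hj2 : j ∈ range (n+2)
      · simp [hj2]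
      · simp only [hj2, if_false, zero_sub, neg_eq_zero]
        apply Polynomial.coeff_eq_zero_of_natDegree_lt
        simp only [mem_range, not_lt] at hj2
        omega
    have hqtop : q.coeff n = (n+1) * p.coeff (n+1) := by
      rw [hqcoeff n]
      have h1 : ∀ m ∈ range (n+2), p.coeff m * (m.choose n : ℂ) =
          (if m = n then p.coeff n else 0) + (if m = n+1 then ((n:ℂ)+1) * p.coeff (n+1) else 0) := by
        intro m hm
        simp only [mem_range] at hm
        rcases Nat.lt_or_ge m n with h | h
        · rw [Nat.choose_eq_zero_of_lt h]
          have h2 : m ≠ n := by omega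
          have h3 : m ≠ n + 1 := by omega
          simp [h2, h3]
        · have hm2 : m = n ∨ m = n+1 := by omega
          rcases hm2 with rfl | rfl
          · simp
          · have hh : (n+1).choose n = n+1 := Nat.choose_succ_self_right n
            rw [hh, if_neg (by omega : ¬ (n+1 = n)), if_pos rfl]
            push_cast; ring
      rw [Finset.sum_congr rfl h1, Finset.sum_add_distrib, Finset.sum_ite_eq',
        Finset.sum_ite_eq']
      have e1 : n ∈ range (n+2) := by simp
      have e2 : n+1 ∈ range (n+2) := by simp
      rw [if_pos e1, if_pos e2]
      ring
    -- now the sum manipulation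
    have key : ∑ a ∈ range (n+2), (-1:ℂ)^(n+1+a) * ((n+1).choose a) * p.eval (a:ℂ)
        = ∑ a ∈ range (n+1), (-1:ℂ)^(n+a) * (n.choose a) * q.eval (a:ℂ) := by
      have g0 : ∀ b : ℕ, (-1:ℂ)^(n+1+b) * (n.choose b) * p.eval (b:ℂ)
          = (-1:ℂ)^(n+1+b) * (n.choose b) * p.eval (b:ℂ) := fun _ => rfl
      rw [Finset.sum_range_succ']
      have hsplit : ∀ a ∈ range (n+1),
          (-1:ℂ)^(n+1+(a+1)) * (((n+1).choose (a+1) : ℕ) : ℂ) * p.eval ((a:ℂ)+1)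
          = (-1:ℂ)^(n+a) * (n.choose a) * p.eval ((a:ℂ)+1)
            + (-1:ℂ)^(n+1+(a+1)) * (n.choose (a+1)) * p.eval ((a:ℂ)+1) := by
        intro a _
        rw [Nat.choose_succ_succ]
        push_cast
        have hsgn : (-1:ℂ)^(n+1+(a+1)) = (-1:ℂ)^(n+a) := by
          have : n+1+(a+1) = (n+a) + 2 := by omega
          rw [this, pow_add]; norm_num
        rw [hsgn]; ring
      calc (∑ a ∈ range (n+1), (-1:ℂ)^(n+1+(a+1)) * (((n+1).choose (a+1):ℕ):ℂ) * p.eval ((a+1:ℕ):ℂ))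
            + (-1:ℂ)^(n+1+0) * (((n+1).choose 0 : ℕ):ℂ) * p.eval ((0:ℕ):ℂ)
          = (∑ a ∈ range (n+1), ((-1:ℂ)^(n+a) * (n.choose a) * p.eval ((a:ℂ)+1)
              + (-1:ℂ)^(n+1+(a+1)) * (n.choose (a+1)) * p.eval ((a:ℂ)+1)))
            + (-1:ℂ)^(n+1) * p.eval 0 := by
            congr 1
            · refine Finset.sum_congr rfl fun a ha => ?_
              rw [← hsplit a ha]
              push_cast
              ring_nf
            · simp
      _ = ∑ a ∈ range (n+1), (-1:ℂ)^(n+a) * (n.choose a) * (p.eval ((a:ℂ)+1) - p.eval (a:ℂ)) := by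
            rw [Finset.sum_add_distrib]
            have hg : ∑ a ∈ range (n+1), (-1:ℂ)^(n+1+(a+1)) * ((n.choose (a+1):ℕ):ℂ) * p.eval ((a:ℂ)+1)
                = ∑ b ∈ range (n+1), (-1:ℂ)^(n+1+b) * (n.choose b) * p.eval (b:ℂ)
                  - (-1:ℂ)^(n+1) * p.eval 0 := by
              have expand : ∑ b ∈ range (n+2), (-1:ℂ)^(n+1+b) * ((n.choose b:ℕ):ℂ) * p.eval (b:ℂ)
                  = (∑ a ∈ range (n+1), (-1:ℂ)^(n+1+(a+1)) * ((n.choose (a+1):ℕ):ℂ) * p.eval (((a+1:ℕ)):ℂ))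
                    + (-1:ℂ)^(n+1+0) * ((n.choose 0:ℕ):ℂ) * p.eval ((0:ℕ):ℂ) :=
                Finset.sum_range_succ' _ (n+1)
              have last : ∑ b ∈ range (n+2), (-1:ℂ)^(n+1+b) * ((n.choose b:ℕ):ℂ) * p.eval (b:ℂ)
                  = ∑ b ∈ range (n+1), (-1:ℂ)^(n+1+b) * ((n.choose b:ℕ):ℂ) * p.eval (b:ℂ) := by
                rw [Finset.sum_range_succ]
                simp [Nat.choose_succ_self]
              rw [last] at expand
              have := expand.symm
              push_cast at this ⊢
              simp only [Nat.choose_zero_right, Nat.cast_one] at this ⊢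
              linear_combination this
            rw [hg]
            have : ∑ a ∈ range (n+1), (-1:ℂ)^(n+1+a) * ((n.choose a:ℕ):ℂ) * p.eval (a:ℂ)
                = - ∑ a ∈ range (n+1), (-1:ℂ)^(n+a) * ((n.choose a:ℕ):ℂ) * p.eval (a:ℂ) := by
              rw [← Finset.sum_neg_distrib]
              refine Finset.sum_congr rfl fun a _ => ?_
              have : (-1:ℂ)^(n+1+a) = -(-1:ℂ)^(n+a) := by
                have : n+1+a = (n+a)+1 := by omega
                rw [this, pow_succ]; ring
              rw [this]; ring
            rw [this]
            rw [show (∑ a ∈ range (n+1), (-1:ℂ)^(n+a) * ((n.choose a : ℕ):ℂ) * (p.eval ((a:ℂ)+1) - p.eval (a:ℂ)))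
                = ∑ a ∈ range (n+1), ((-1:ℂ)^(n+a) * ((n.choose a : ℕ):ℂ) * p.eval ((a:ℂ)+1)
                    - (-1:ℂ)^(n+a) * ((n.choose a : ℕ):ℂ) * p.eval (a:ℂ))
              from Finset.sum_congr rfl fun a _ => by ring]
            rw [Finset.sum_sub_distrib]
            ring
      _ = ∑ a ∈ range (n+1), (-1:ℂ)^(n+a) * (n.choose a) * q.eval (a:ℂ) := by
            refine Finset.sum_congr rfl fun a _ => ?_
            rw [hqeval]
    rw [key, ih q hqdeg, hqtop]
    rw [Nat.factorial_succ]
    push_cast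
    ring


lemma prod_merge (w : ℂ) (a m : ℕ) (ha : a ≤ m) (hm : 1 ≤ m) :
    (∏ i ∈ range a, (w - i)) * (∏ i ∈ range (m-a), (w + i))
      = w * ∏ j ∈ range (m-1), (w - a + 1 + j) := by
  rcases a with _ | a'
  · simp only [range_zero, prod_empty, one_mul, Nat.sub_zero, Nat.cast_zero, sub_zero]
    have hm' : m = (m-1) + 1 := by omega
    rw [hm', Finset.prod_range_succ']
    simp only [Nat.cast_zero, add_zero]
    rw [mul_comm]
    congr 1
    refine Finset.prod_congr rfl fun i _ => ?_
    push_cast; ring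
  · have h1 : (∏ i ∈ range (a'+1), (w - i)) = w * ∏ i ∈ range a', (w - 1 - i) := by
      rw [Finset.prod_range_succ']
      simp only [Nat.cast_zero, sub_zero]
      rw [mul_comm]
      congr 1
      exact Finset.prod_congr rfl fun i _ => by push_cast; ring
    have hsplit : m - 1 = a' + (m - (a'+1)) := by omega
    conv_rhs => rw [hsplit, Finset.prod_range_add]
    have h2 : (∏ j ∈ range a', (w - (a'+1:ℕ) + 1 + j)) = ∏ i ∈ range a', (w - 1 - i) := by
      rw [← Finset.prod_range_reflect (fun j => w - 1 - (j:ℂ)) a']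
      refine Finset.prod_congr rfl fun j hj => ?_
      simp only [mem_range] at hj
      have : ((a' - 1 - j : ℕ) : ℂ) = (a':ℂ) - 1 - j := by
        push_cast [Nat.cast_sub (by omega : j ≤ a' - 1), Nat.cast_sub (by omega : 1 ≤ a')]
        ring
      rw [this]
      push_cast
      ring
    have h3 : (∏ t ∈ range (m - (a'+1)), (w - (a'+1:ℕ) + 1 + (a' + t : ℕ))) =
        ∏ t ∈ range (m - (a'+1)), (w + t) := by
      refine Finset.prod_congr rfl fun t _ => by push_cast; ring
    rw [h2, h3, h1]
    ring

lemma genBinom_mul_neg (w : ℂ) (a m : ℕ) (ha : a ≤ m) (hm : 1 ≤ m) :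
    genBinom w a * genBinom (-w) (m-a)
      = (-1)^(m+a) * (m.choose a : ℕ) / m.factorial
          * (w * ∏ j ∈ range (m-1), (w - a + 1 + j)) := by
  unfold genBinom
  have hneg : (∏ i ∈ range (m-a), (-w - i)) = (-1)^(m-a) * ∏ i ∈ range (m-a), (w + i) := by
    rw [show (-1:ℂ)^(m-a) = ∏ _i ∈ range (m-a), (-1:ℂ) by
      rw [Finset.prod_const, Finset.card_range]]
    rw [← Finset.prod_mul_distrib]
    exact Finset.prod_congr rfl fun i _ => by ring
  rw [hneg]
  have hsgn : (-1:ℂ)^(m-a) = (-1:ℂ)^(m+a) := by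
    have : m + a = (m - a) + 2*a := by omega
    rw [this, pow_add, pow_mul]
    norm_num
  have hchoose : ((m.choose a : ℕ) : ℂ) * a.factorial * (m-a).factorial = m.factorial := by
    exact_mod_cast congrArg (Nat.cast (R := ℂ)) (Nat.choose_mul_factorial_mul_factorial ha)
  have hc : ((m.choose a : ℕ) : ℂ) / m.factorial = 1 / (a.factorial * (m-a).factorial) := by
    rw [div_eq_div_iff (fact_ne m) (mul_ne_zero (fact_ne a) (fact_ne (m-a))), one_mul,
      ← mul_assoc]
    exact hchoose
  rw [hsgn, ← prod_merge w a m ha hm]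
  field_simp [fact_ne]
  linear_combination (-((∏ i ∈ range a, (w - i)) * (∏ i ∈ range (m-a), (w + i)))) * hc

lemma S_hyper (z : ℂ) (n : ℕ) :
    ∑ a ∈ range (n+2), genBinom ((a:ℂ)*z) a * genBinom (-((a:ℂ)*z)) (n+1-a)
      = z * (z-1)^n := by
  classical
  set m := n + 1 with hm
  set P : Polynomial ℂ :=
    (Polynomial.C z * X) * ∏ j ∈ range n, (Polynomial.C (z-1) * X + Polynomial.C (1+(j:ℂ))) with hP
  have hPdeg : P.natDegree ≤ m := by
    rw [hP]
    apply le_trans (Polynomial.natDegree_mul_le)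
    have h1 : (Polynomial.C z * X).natDegree ≤ 1 :=
      le_trans (Polynomial.natDegree_C_mul_le _ _) (by simp)
    have h2 : (∏ j ∈ range n, (Polynomial.C (z-1) * X + Polynomial.C (1+(j:ℂ)))).natDegree ≤ n := by
      apply le_trans (Polynomial.natDegree_prod_le _ _)
      apply le_trans (Finset.sum_le_sum fun j _ => Polynomial.natDegree_linear_le)
      simp [Finset.sum_const, Finset.card_range]
    omega
  have hPcoeff : P.coeff m = z * (z-1)^n := by
    rw [hP, mul_assoc, Polynomial.coeff_C_mul, Polynomial.coeff_X_mul]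
    congr 1
    have := Polynomial.coeff_prod_of_natDegree_le
      (fun j => Polynomial.C (z-1) * X + Polynomial.C (1+(j:ℂ))) 1
      (s := range n) (fun j _ => Polynomial.natDegree_linear_le)
    rw [Finset.card_range] at this
    rw [mul_one] at this
    rw [this]
    have hco : ∀ j ∈ range n, (Polynomial.C (z-1) * X + Polynomial.C (1+(j:ℂ))).coeff 1 = z - 1 := by
      intro j _
      rw [Polynomial.coeff_add, Polynomial.coeff_C_mul, Polynomial.coeff_X_one, Polynomial.coeff_C]
      norm_num
    rw [Finset.prod_congr rfl hco, Finset.prod_const, Finset.card_range]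
  have hPeval : ∀ a : ℕ, P.eval (a:ℂ) =
      ((a:ℂ)*z) * ∏ j ∈ range n, ((a:ℂ)*z - a + 1 + j) := by
    intro a
    rw [hP]
    have he : ∀ j:ℕ, (z-1) * (a:ℂ) + (1 + (j:ℂ)) = (a:ℂ)*z - a + 1 + j := fun j => by ring
    simp only [eval_mul, eval_C, eval_X, eval_prod, eval_add, he]
    ring
  have hterm : ∀ a ∈ range (n+2),
      genBinom ((a:ℂ)*z) a * genBinom (-((a:ℂ)*z)) (n+1-a)
        = (1 / (m.factorial : ℂ)) * ((-1)^(m+a) * (m.choose a : ℕ) * P.eval (a:ℂ)) := by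
    intro a ha
    simp only [mem_range] at ha
    rw [genBinom_mul_neg ((a:ℂ)*z) a m (by omega) (by omega), hPeval a]
    have hmn : m - 1 = n := by omega
    rw [hmn]
    field_simp [fact_ne]
  rw [Finset.sum_congr rfl hterm, ← Finset.mul_sum]
  have := findiff m P hPdeg
  rw [show m + 1 = n + 2 from rfl] at this
  rw [this, hPcoeff]
  field_simp [fact_ne]
  rw [mul_assoc]; exact mul_div_cancel_left₀ _ (fact_ne m)


lemma T_hyper (z : ℂ) (n : ℕ) :
    ∑ k ∈ range (n+2), genBinom (-(k:ℂ)) (n+1-k) * z^k = z * (z-1)^n := by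
  have hterm : ∀ k ∈ range (n+2),
      genBinom (-(k:ℂ)) (n+1-k) * z^k
        = ((-1:ℂ)^(n+1-k) * ((n.choose (n+1-k) : ℕ):ℂ)) * z^k := by
    intro k hk
    simp only [mem_range] at hk
    rw [genBinom_neg_nat k (n+1-k)]
    have : k + (n+1-k) - 1 = n := by omega
    rw [this]
  rw [Finset.sum_congr rfl hterm]
  rw [Finset.sum_range_succ']
  have h0 : (-1:ℂ)^(n+1-0) * ((n.choose (n+1-0) : ℕ):ℂ) * z^0 = 0 := by
    simp [Nat.choose_succ_self]
  rw [h0, add_zero]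
  have hterm2 : ∀ k ∈ range (n+1),
      (-1:ℂ)^(n+1-(k+1)) * ((n.choose (n+1-(k+1)) : ℕ):ℂ) * z^(k+1)
        = z * (z^k * (-1:ℂ)^(n-k) * (n.choose k : ℕ)) := by
    intro k hk
    simp only [mem_range] at hk
    have e1 : n + 1 - (k+1) = n - k := by omega
    rw [e1, Nat.choose_symm (by omega : k ≤ n)]
    ring
  rw [Finset.sum_congr rfl hterm2, ← Finset.mul_sum]
  congr 1
  rw [show z - 1 = z + (-1) from by ring, add_pow]


lemma rothe (z : ℂ) : ∀ (n : ℕ) (x y : ℂ),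
    ∑ a ∈ range (n+1), genBinom (x + a*z) a * genBinom (y + ((n-a:ℕ):ℂ)*z) (n-a)
      = ∑ k ∈ range (n+1), genBinom (x + y + (n:ℂ)*z - k) (n-k) * z^k := by
  intro n
  induction n with
  | zero =>
    intro x y
    simp [genBinom_zero]
  | succ n ih =>
    have hSdiff : ∀ x y : ℂ,
        (∑ a ∈ range (n+2), genBinom (x + a*z) a * genBinom (y + ((n+1-a:ℕ):ℂ)*z) (n+1-a))
        - (∑ a ∈ range (n+2), genBinom ((x-1) + a*z) a * genBinom (y + ((n+1-a:ℕ):ℂ)*z) (n+1-a))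
        = ∑ a ∈ range (n+1), genBinom ((x+z-1) + a*z) a * genBinom (y + ((n-a:ℕ):ℂ)*z) (n-a) := by
      intro x y
      rw [← Finset.sum_sub_distrib]
      have hterm : ∀ a ∈ range (n+2),
          genBinom (x + a*z) a * genBinom (y + ((n+1-a:ℕ):ℂ)*z) (n+1-a)
            - genBinom ((x-1) + a*z) a * genBinom (y + ((n+1-a:ℕ):ℂ)*z) (n+1-a)
          = (genBinom (x + a*z) a - genBinom ((x-1) + a*z) a)
              * genBinom (y + ((n+1-a:ℕ):ℂ)*z) (n+1-a) := fun a _ => by ring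
      rw [Finset.sum_congr rfl hterm, Finset.sum_range_succ']
      have h0 : (genBinom (x + (0:ℕ)*z) 0 - genBinom ((x-1) + (0:ℕ)*z) 0)
          * genBinom (y + ((n+1-0:ℕ):ℂ)*z) (n+1-0) = 0 := by
        rw [genBinom_zero, genBinom_zero]; ring
      rw [h0, add_zero]
      refine Finset.sum_congr rfl fun a ha => ?_
      simp only [mem_range] at ha
      have e1 : n + 1 - (a+1) = n - a := by omega
      rw [e1]
      have e2 : genBinom (x + ((a+1:ℕ):ℂ)*z) (a+1) - genBinom ((x-1) + ((a+1:ℕ):ℂ)*z) (a+1)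
          = genBinom ((x+z-1) + (a:ℂ)*z) a := by
        have hp := pascal (x + ((a+1:ℕ):ℂ)*z) a
        have e3 : x + ((a+1:ℕ):ℂ)*z - 1 = (x-1) + ((a+1:ℕ):ℂ)*z := by ring
        have e4 : x + ((a+1:ℕ):ℂ)*z - 1 = (x+z-1) + (a:ℂ)*z := by push_cast; ring
        rw [e3] at hp
        rw [hp]
        rw [← e3, e4]
        ring
      rw [e2]
    have hTdiff : ∀ x y : ℂ,
        (∑ k ∈ range (n+2), genBinom (x + y + ((n+1:ℕ):ℂ)*z - k) (n+1-k) * z^k)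
        - (∑ k ∈ range (n+2), genBinom ((x-1) + y + ((n+1:ℕ):ℂ)*z - k) (n+1-k) * z^k)
        = ∑ k ∈ range (n+1), genBinom ((x+z-1) + y + (n:ℂ)*z - k) (n-k) * z^k := by
      intro x y
      rw [← Finset.sum_sub_distrib, Finset.sum_range_succ]
      have hlast : genBinom (x + y + ((n+1:ℕ):ℂ)*z - (n+1:ℕ)) (n+1-(n+1)) * z^(n+1)
          - genBinom ((x-1) + y + ((n+1:ℕ):ℂ)*z - (n+1:ℕ)) (n+1-(n+1)) * z^(n+1) = 0 := by
        rw [Nat.sub_self, genBinom_zero, genBinom_zero]; ring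
      rw [hlast, add_zero]
      refine Finset.sum_congr rfl fun k hk => ?_
      simp only [mem_range] at hk
      have e1 : n + 1 - k = (n - k) + 1 := by omega
      rw [e1]
      have hp := pascal (x + y + ((n+1:ℕ):ℂ)*z - k) (n-k)
      have e3 : x + y + ((n+1:ℕ):ℂ)*z - k - 1 = (x-1) + y + ((n+1:ℕ):ℂ)*z - k := by ring
      have e4 : x + y + ((n+1:ℕ):ℂ)*z - k - 1 = (x+z-1) + y + (n:ℂ)*z - k := by push_cast; ring
      rw [e3] at hp
      rw [hp, ← e3, e4]
      ring
    -- constancy in first argument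
    have hconst : ∀ (y u v : ℂ),
        (∑ a ∈ range (n+2), genBinom (u + a*z) a * genBinom (y + ((n+1-a:ℕ):ℂ)*z) (n+1-a))
        - (∑ k ∈ range (n+2), genBinom (u + y + ((n+1:ℕ):ℂ)*z - k) (n+1-k) * z^k)
        = (∑ a ∈ range (n+2), genBinom (v + a*z) a * genBinom (y + ((n+1-a:ℕ):ℂ)*z) (n+1-a))
        - (∑ k ∈ range (n+2), genBinom (v + y + ((n+1:ℕ):ℂ)*z - k) (n+1-k) * z^k) := by
      intro y u v
      set pS : Polynomial ℂ := ∑ a ∈ range (n+2),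
        Polynomial.C (genBinom (y + ((n+1-a:ℕ):ℂ)*z) (n+1-a) * (1/(a.factorial:ℂ)))
          * ∏ i ∈ range a, (X + Polynomial.C ((a:ℂ)*z - i)) with hpS
      set pT : Polynomial ℂ := ∑ k ∈ range (n+2),
        Polynomial.C (z^k * (1/((n+1-k).factorial:ℂ)))
          * ∏ i ∈ range (n+1-k), (X + Polynomial.C (y + ((n+1:ℕ):ℂ)*z - k - i)) with hpT
      have hevS : ∀ x : ℂ, pS.eval x
          = ∑ a ∈ range (n+2), genBinom (x + a*z) a * genBinom (y + ((n+1-a:ℕ):ℂ)*z) (n+1-a) := by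
        intro x
        rw [hpS]
        simp only [eval_finset_sum, eval_mul, eval_C, eval_prod, eval_add, eval_X]
        refine Finset.sum_congr rfl fun a _ => ?_
        unfold genBinom
        rw [show (∏ i ∈ range a, (x + ((a:ℂ)*z - i))) = ∏ i ∈ range a, ((x + (a:ℂ)*z) - i) from
          Finset.prod_congr rfl fun i _ => by ring]
        field_simp
      have hevT : ∀ x : ℂ, pT.eval x
          = ∑ k ∈ range (n+2), genBinom (x + y + ((n+1:ℕ):ℂ)*z - k) (n+1-k) * z^k := by
        intro x
        rw [hpT]
        simp only [eval_finset_sum, eval_mul, eval_C, eval_prod, eval_add, eval_X]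
        refine Finset.sum_congr rfl fun k _ => ?_
        unfold genBinom
        rw [show (∏ i ∈ range (n+1-k), (x + (y + ((n+1:ℕ):ℂ)*z - k - i)))
            = ∏ i ∈ range (n+1-k), ((x + y + ((n+1:ℕ):ℂ)*z - k) - i) from
          Finset.prod_congr rfl fun i _ => by ring]
        field_simp
      have hper : ∀ x : ℂ, (pS - pT).eval (x+1) = (pS - pT).eval x := by
        intro x
        simp only [eval_sub, hevS, hevT]
        have h1 := hSdiff (x+1) y
        have h2 := hTdiff (x+1) y
        rw [show x + 1 - 1 = x from by ring] at h1 h2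
        have h3 := ih (x+z) y
        rw [show x+1+z-1 = x+z from by ring] at h1 h2
        linear_combination h1 - h2 + h3
      have hc := poly_const (pS - pT) hper u v
      rw [eval_sub, eval_sub, hevS, hevT, hevS, hevT] at hc
      exact hc
    -- symmetry
    have hsymS : ∀ x y : ℂ,
        (∑ a ∈ range (n+2), genBinom (x + a*z) a * genBinom (y + ((n+1-a:ℕ):ℂ)*z) (n+1-a))
        = ∑ a ∈ range (n+2), genBinom (y + a*z) a * genBinom (x + ((n+1-a:ℕ):ℂ)*z) (n+1-a) := by
      intro x y
      rw [← Finset.sum_range_reflect]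
      refine Finset.sum_congr rfl fun a ha => ?_
      simp only [mem_range] at ha
      have e1 : n + 2 - 1 - a = n + 1 - a := by omega
      have e2 : n + 1 - (n + 1 - a) = a := by omega
      rw [e1, e2, mul_comm]
    have hsymT : ∀ x y : ℂ,
        (∑ k ∈ range (n+2), genBinom (x + y + ((n+1:ℕ):ℂ)*z - k) (n+1-k) * z^k)
        = ∑ k ∈ range (n+2), genBinom (y + x + ((n+1:ℕ):ℂ)*z - k) (n+1-k) * z^k := by
      intro x y
      refine Finset.sum_congr rfl fun k _ => ?_
      rw [add_comm x y]
    -- chain to the evaluation point (0, -(n+1)z)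
    intro x y
    have step1 := hconst y x 0
    have step2 := hsymS 0 y
    have step3 := hsymT 0 y
    have step4 := hconst 0 y (-(((n+1:ℕ):ℂ))*z)
    have step5 := hsymS (-(((n+1:ℕ):ℂ))*z) 0
    have step6 := hsymT (-(((n+1:ℕ):ℂ))*z) 0
    -- evaluation
    have hSeval :
        (∑ a ∈ range (n+2), genBinom ((0:ℂ) + a*z) a
          * genBinom ((-(((n+1:ℕ):ℂ))*z) + ((n+1-a:ℕ):ℂ)*z) (n+1-a)) = z * (z-1)^n := by
      rw [← S_hyper z n]
      refine Finset.sum_congr rfl fun a ha => ?_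
      simp only [mem_range] at ha
      have e1 : ((n+1-a:ℕ):ℂ) = ((n+1:ℕ):ℂ) - a := by
        push_cast [Nat.cast_sub (by omega : a ≤ n+1)]; ring
      rw [e1]
      have e2 : (0:ℂ) + (a:ℂ)*z = (a:ℂ)*z := by ring
      have e3 : (-(((n+1:ℕ):ℂ))*z) + (((n+1:ℕ):ℂ) - a)*z = -((a:ℂ)*z) := by ring
      rw [e2, e3]
    have hTeval :
        (∑ k ∈ range (n+2), genBinom ((0:ℂ) + (-(((n+1:ℕ):ℂ))*z) + ((n+1:ℕ):ℂ)*z - k) (n+1-k) * z^k)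
          = z * (z-1)^n := by
      rw [← T_hyper z n]
      refine Finset.sum_congr rfl fun k _ => ?_
      have e1 : (0:ℂ) + (-(((n+1:ℕ):ℂ))*z) + ((n+1:ℕ):ℂ)*z - k = -(k:ℂ) := by ring
      rw [e1]
    -- combine
    have final : (∑ a ∈ range (n+2), genBinom (x + a*z) a * genBinom (y + ((n+1-a:ℕ):ℂ)*z) (n+1-a))
        - (∑ k ∈ range (n+2), genBinom (x + y + ((n+1:ℕ):ℂ)*z - k) (n+1-k) * z^k) = 0 := by
      rw [step1, step2, step3, step4, step5, step6]
      rw [hSeval, hTeval]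
      ring
    have goal := sub_eq_zero.mp final
    convert goal using 2 <;> push_cast <;> ring

lemma hockey (s : ℕ) (hs : 1 ≤ s) (k : ℕ) :
    ∑ j ∈ range (k+1), (j + s - 2).choose j = (k + s - 1).choose k := by
  rcases s with _ | s
  · omega
  rcases s with _ | s'
  · have h1 : ∀ j ∈ range (k+1), (j + 1 - 2).choose j = if j = 0 then 1 else 0 := by
      intro j _
      rcases j with _ | j
      · simp
      · rw [if_neg (by omega)]
        apply Nat.choose_eq_zero_of_lt
        omega
    rw [Finset.sum_congr rfl h1, Finset.sum_ite_eq' (range (k+1)) 0 (fun _ => 1)]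
    simp
  · have e : ∀ j, j + (s'+2) - 2 = j + s' := fun j => by omega
    simp only [e]
    have symm : ∀ j ∈ range (k+1), (j+s').choose j = (j+s').choose s' := by
      intro j _
      rw [← Nat.choose_symm (by omega : j ≤ j+s')]
      congr 1
      omega
    rw [Finset.sum_congr rfl symm]
    have hI := Nat.sum_Icc_choose (k+s') s'
    rw [show Finset.Icc s' (k+s') = Finset.map ⟨fun i => s' + i, fun a b h => by simpa using h⟩ (range (k+1))
      from ?_] at hI
    · rw [Finset.sum_map] at hI
      change ∑ x ∈ range (k + 1), (s' + x).choose s' = _ at hI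
      rw [show (∑ j ∈ range (k+1), (j+s').choose s') = ∑ j ∈ range (k+1), (s'+j).choose s' from
        Finset.sum_congr rfl fun j _ => by rw [add_comm]]
      rw [hI]
      rw [← Nat.choose_symm (by omega : s'+1 ≤ k+s'+1)]
      congr 1
      omega
    · ext i
      simp only [Finset.mem_Icc, Finset.mem_map, Finset.mem_range, Function.Embedding.coeFn_mk]
      constructor
      · rintro ⟨h1, h2⟩
        refine ⟨i - s', by omega, ?_⟩
        show s' + (i - s') = i
        omega
      · rintro ⟨a, ha, rfl⟩
        show s' ≤ s' + a ∧ s' + a ≤ k + s'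
        omega

lemma tri (f : ℕ → ℕ → ℂ) : ∀ n : ℕ,
    ∑ j ∈ range (n+1), ∑ m ∈ range (n+1-j), f j m
      = ∑ k ∈ range (n+1), ∑ j ∈ range (k+1), f j (k-j) := by
  intro n
  induction n with
  | zero => simp
  | succ n ih =>
    have peel1 : (∑ j ∈ range (n+2), ∑ m ∈ range (n+2-j), f j m)
        = (∑ j ∈ range (n+1), ∑ m ∈ range (n+2-j), f j m) + f (n+1) 0 := by
      rw [Finset.sum_range_succ]
      congr 1
      rw [show n+2-(n+1) = 1 from by omega, Finset.sum_range_one]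
    have peel2 : ∀ j ∈ range (n+1),
        (∑ m ∈ range (n+2-j), f j m) = (∑ m ∈ range (n+1-j), f j m) + f j (n+1-j) := by
      intro j hj
      simp only [mem_range] at hj
      rw [show n+2-j = (n+1-j)+1 from by omega, Finset.sum_range_succ]
    have peel3 : (∑ k ∈ range (n+2), ∑ j ∈ range (k+1), f j (k-j))
        = (∑ k ∈ range (n+1), ∑ j ∈ range (k+1), f j (k-j))
          + ∑ j ∈ range (n+2), f j (n+1-j) := by
      rw [Finset.sum_range_succ]
    have peel4 : (∑ j ∈ range (n+2), f j (n+1-j)) = (∑ j ∈ range (n+1), f j (n+1-j)) + f (n+1) 0 := by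
      rw [Finset.sum_range_succ, Nat.sub_self]
    rw [peel1, Finset.sum_congr rfl peel2, Finset.sum_add_distrib, ih, peel3, peel4]
    ring

lemma triswap (f : ℕ → ℕ → ℂ) (n : ℕ) :
    ∑ a ∈ range (n+1), ∑ j ∈ range (n+1-a), f a j
      = ∑ j ∈ range (n+1), ∑ a ∈ range (n+1-j), f a j := by
  rw [tri f n, tri (fun j a => f a j) n]
  refine Finset.sum_congr rfl fun k hk => ?_
  rw [← Finset.sum_range_reflect (fun j => f (k-j) j) (k+1)]
  refine Finset.sum_congr rfl fun j hj => ?_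
  simp only [mem_range] at hj
  congr 1 <;> omega

lemma split_tuple (s n : ℕ) (f : (Fin (s+1) → ℕ) → ℂ) :
    ∑ k ∈ Finset.Nat.antidiagonalTuple (s+1) n, f k
      = ∑ a ∈ range (n+1), ∑ t ∈ Finset.Nat.antidiagonalTuple s (n-a), f (Fin.cons a t) := by
  rw [show (∑ a ∈ range (n+1), ∑ t ∈ Finset.Nat.antidiagonalTuple s (n-a), f (Fin.cons a t))
      = ∑ x ∈ (range (n+1)).sigma (fun a => Finset.Nat.antidiagonalTuple s (n-a)),
          f (Fin.cons x.1 x.2)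
    from (Finset.sum_sigma' _ _ _)]
  apply Finset.sum_nbij' (i := fun k => (⟨k 0, Fin.tail k⟩ : Σ _ : ℕ, (Fin s → ℕ)))
    (j := fun x => Fin.cons x.1 x.2)
  · intro k hk
    rw [Finset.Nat.mem_antidiagonalTuple] at hk
    rw [Fin.sum_univ_succ] at hk
    refine Finset.mem_sigma.mpr ⟨?_, ?_⟩
    · show k 0 ∈ range (n+1)
      rw [mem_range]; omega
    · show Fin.tail k ∈ Finset.Nat.antidiagonalTuple s (n - k 0)
      rw [Finset.Nat.mem_antidiagonalTuple]
      have ht : ∑ i : Fin s, Fin.tail k i = ∑ i : Fin s, k i.succ := rfl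
      omega
  · intro x hx
    rw [Finset.mem_sigma, mem_range, Finset.Nat.mem_antidiagonalTuple] at hx
    rw [Finset.Nat.mem_antidiagonalTuple, Fin.sum_univ_succ]
    simp only [Fin.cons_zero, Fin.cons_succ]
    omega
  · intro k _
    exact Fin.cons_self_tail k
  · rintro ⟨a, t⟩ _
    simp [Fin.tail_cons]
  · intro k _
    rw [Fin.cons_self_tail]

lemma chu_aux (z : ℂ) : ∀ (s : ℕ), 1 ≤ s → ∀ (n : ℕ) (x : Fin s → ℂ),
    (∑ k ∈ Finset.Nat.antidiagonalTuple s n, ∏ i, genBinom (x i + k i * z) (k i))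
      = ∑ k ∈ Finset.range (n + 1),
          ((k + s - 2).choose k : ℂ) * genBinom ((∑ i, x i) + n * z - k) (n - k) * z ^ k := by
  refine Nat.le_induction ?_ ?_
  · -- s = 1
    intro n x
    rw [Finset.Nat.antidiagonalTuple_one, Finset.sum_singleton]
    rw [Finset.sum_eq_single 0]
    · simp only [Fin.prod_univ_one, Fin.sum_univ_one, Matrix.cons_val_zero]
      norm_num
    · intro k _ hk
      have : (k + 1 - 2).choose k = 0 := Nat.choose_eq_zero_of_lt (by omega)
      rw [this]
      norm_num
    · intro h
      exact absurd (by simp : (0:ℕ) ∈ range (n+1)) h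
  · -- step
    intro s hs ih n x
    rw [split_tuple s n (fun k => ∏ i, genBinom (x i + k i * z) (k i))]
    -- expand the product over Fin (s+1)
    have hprod : ∀ (a : ℕ) (t : Fin s → ℕ),
        (∏ i, genBinom (x i + (Fin.cons a t : Fin (s+1) → ℕ) i * z) ((Fin.cons a t : Fin (s+1) → ℕ) i))
          = genBinom (x 0 + a * z) a
            * ∏ i : Fin s, genBinom (x i.succ + t i * z) (t i) := by
      intro a t
      rw [Fin.prod_univ_succ]
      simp only [Fin.cons_zero, Fin.cons_succ]
    have step1 : ∀ a ∈ range (n+1),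
        (∑ t ∈ Finset.Nat.antidiagonalTuple s (n-a),
          ∏ i, genBinom (x i + (Fin.cons a t : Fin (s+1) → ℕ) i * z) ((Fin.cons a t : Fin (s+1) → ℕ) i))
        = ∑ j ∈ range (n+1-a), genBinom (x 0 + a * z) a *
            (((j + s - 2).choose j : ℂ)
              * genBinom ((∑ i : Fin s, x i.succ) + ((n-a:ℕ):ℂ) * z - j) (n-a-j) * z ^ j) := by
      intro a ha
      simp only [mem_range] at ha
      rw [Finset.sum_congr rfl (fun t _ => hprod a t), ← Finset.mul_sum]
      rw [ih (n-a) (fun i => x i.succ)]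
      rw [show n-a+1 = n+1-a from by omega, Finset.mul_sum]
    rw [Finset.sum_congr rfl step1]
    -- swap the triangle
    rw [triswap (fun a j => genBinom (x 0 + a * z) a *
            (((j + s - 2).choose j : ℂ)
              * genBinom ((∑ i : Fin s, x i.succ) + ((n-a:ℕ):ℂ) * z - j) (n-a-j) * z ^ j)) n]
    -- apply rothe to the inner sums
    have step2 : ∀ j ∈ range (n+1),
        (∑ a ∈ range (n+1-j), genBinom (x 0 + a * z) a *
            (((j + s - 2).choose j : ℂ)
              * genBinom ((∑ i : Fin s, x i.succ) + ((n-a:ℕ):ℂ) * z - j) (n-a-j) * z ^ j))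
        = ∑ m ∈ range (n+1-j), ((j + s - 2).choose j : ℂ) * z ^ j *
            (genBinom ((x 0 + ((∑ i : Fin s, x i.succ) - j + j * z)) + ((n-j:ℕ):ℂ) * z - m) (n-j-m) * z ^ m) := by
      intro j hj
      simp only [mem_range] at hj
      have hN : n + 1 - j = (n - j) + 1 := by omega
      rw [hN]
      have inner : ∀ a ∈ range ((n-j)+1),
          genBinom (x 0 + a * z) a *
            (((j + s - 2).choose j : ℂ)
              * genBinom ((∑ i : Fin s, x i.succ) + ((n-a:ℕ):ℂ) * z - j) (n-a-j) * z ^ j)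
          = ((j + s - 2).choose j : ℂ) * z ^ j *
            (genBinom (x 0 + a * z) a
              * genBinom ((((∑ i : Fin s, x i.succ) - j + j * z)) + (((n-j)-a:ℕ):ℂ) * z) ((n-j)-a)) := by
        intro a ha
        simp only [mem_range] at ha
        have e1 : ((n-a:ℕ):ℂ) = (n:ℂ) - a := by
          push_cast [Nat.cast_sub (by omega : a ≤ n)]; ring
        have e2 : (((n-j)-a:ℕ):ℂ) = (n:ℂ) - j - a := by
          push_cast [Nat.cast_sub (by omega : a ≤ n - j), Nat.cast_sub (by omega : j ≤ n)]; ring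
        have e3 : n - a - j = (n-j) - a := by omega
        rw [e1, e2, e3]
        have e4 : (∑ i : Fin s, x i.succ) + ((n:ℂ) - a) * z - j
            = (((∑ i : Fin s, x i.succ) - j + j * z)) + ((n:ℂ) - j - a) * z := by ring
        rw [e4]
        ring
      rw [Finset.sum_congr rfl inner, ← Finset.mul_sum]
      rw [rothe z (n-j) (x 0) ((∑ i : Fin s, x i.succ) - j + j * z)]
      rw [Finset.mul_sum, ← hN]
    rw [Finset.sum_congr rfl step2]
    have step3 : ∀ j ∈ range (n+1),
        (∑ m ∈ range (n+1-j), ((j + s - 2).choose j : ℂ) * z ^ j *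
            (genBinom ((x 0 + ((∑ i : Fin s, x i.succ) - j + j * z)) + ((n-j:ℕ):ℂ) * z - m) (n-j-m) * z ^ m))
        = ∑ m ∈ range (n+1-j),
            ((j + s - 2).choose j : ℂ)
              * genBinom ((∑ i : Fin (s+1), x i) + (n:ℂ) * z - ((j:ℂ)+(m:ℂ))) (n-(j+m)) * z ^ (j+m) := by
      intro j hj
      simp only [mem_range] at hj
      refine Finset.sum_congr rfl fun m hm => ?_
      simp only [mem_range] at hm
      have e1 : ((n-j:ℕ):ℂ) = (n:ℂ) - j := by
        push_cast [Nat.cast_sub (by omega : j ≤ n)]; ring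
      have e2 : n - j - m = n - (j+m) := by omega
      have e3 : (∑ i : Fin (s+1), x i) = x 0 + ∑ i : Fin s, x i.succ := Fin.sum_univ_succ x
      have e4 : (x 0 + ((∑ i : Fin s, x i.succ) - j + j * z)) + ((n:ℂ) - j) * z - m
          = (∑ i : Fin (s+1), x i) + (n:ℂ) * z - ((j:ℂ)+(m:ℂ)) := by rw [e3]; ring
      rw [e1, e2, e4, pow_add]
      ring
    rw [Finset.sum_congr rfl step3]
    rw [tri (fun j m => ((j + s - 2).choose j : ℂ)
        * genBinom ((∑ i : Fin (s+1), x i) + (n:ℂ) * z - ((j:ℂ)+(m:ℂ))) (n-(j+m)) * z ^ (j+m)) n]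
    refine Finset.sum_congr rfl fun k hk => ?_
    simp only [mem_range] at hk
    have per : ∀ j ∈ range (k+1),
        ((j + s - 2).choose j : ℂ)
            * genBinom ((∑ i : Fin (s+1), x i) + (n:ℂ) * z - ((j:ℂ)+((k-j:ℕ):ℂ))) (n-(j+(k-j))) * z ^ (j+(k-j))
        = ((j + s - 2).choose j : ℂ)
            * (genBinom ((∑ i : Fin (s+1), x i) + (n:ℂ) * z - k) (n-k) * z ^ k) := by
      intro j hj
      simp only [mem_range] at hj
      have e1 : j + (k-j) = k := by omega
      have e2 : ((j:ℂ)+((k-j:ℕ):ℂ)) = (k:ℂ) := by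
        push_cast [Nat.cast_sub (by omega : j ≤ k)]; ring
      rw [e1, e2]
      ring
    rw [Finset.sum_congr rfl per, ← Finset.sum_mul, ← Nat.cast_sum]
    rw [hockey s hs k]
    rw [show k+(s+1)-2 = k+s-1 from by omega]
    ring

/-- Chu's identity. -/
theorem chu_identity (s : ℕ) (hs : 2 ≤ s) (n : ℕ) (x : Fin s → ℂ) (z : ℂ) :
    ∑ k ∈ Finset.Nat.antidiagonalTuple s n, ∏ i, genBinom (x i + k i * z) (k i) =
      ∑ k ∈ Finset.range (n + 1),
        ((k + s - 2).choose k : ℂ) * genBinom ((∑ i, x i) + n * z - k) (n - k) * z ^ k :=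
  chu_aux z s (by omega) n x
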